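/- Let G be a diamond-free graph containing an induced 5-cycle v1v2v3v4v5, F_i the vertices outside the cycle adjacent exactly to v_i, v_{i-2}, v_{i+2}, and B_{j,j+1} the vertices adjacent exactly to v_j, v_{j+1}. Then F_i is complete to B_{i+2,i+3} and anti-complete to B_{j,j+1} for every j ≠ i+2 (mod 5). -/

import Mathlib

open SimpleGraph

def diamond : SimpleGraph (Fin 4) := (⊤ : SimpleGraph (Fin 4)).deleteEdges {s(0, 1)}

lemma noDiamond {V : Type*} (G : SimpleGraph V) (hD : ¬ Nonempty (diamond ↪g G))
    (a b c d : V) (hab : a ≠ b) (nab : ¬ G.Adj a b)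
    (hac : G.Adj a c) (had : G.Adj a d) (hbc : G.Adj b c) (hbd : G.Adj b d)
    (hcd : G.Adj c d) : False := by
  apply hD
  have h1 := hac.ne
  have h2 := had.ne
  have h3 := hbc.ne
  have h4 := hbd.ne
  have h5 := hcd.ne
  refine ⟨⟨⟨![a,b,c,d], ?_⟩, ?_⟩⟩
  · intro x y
    fin_cases x <;> fin_cases y <;> simp_all <;> (intro h; subst h; simp_all)
  · intro x y
    change G.Adj (![a,b,c,d] x) (![a,b,c,d] y) ↔ _
    fin_cases x <;> fin_cases y <;>
      simp_all [diamond, SimpleGraph.deleteEdges_adj, G.adj_comm, Sym2.eq, Sym2.rel_iff']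

theorem stmt_14 {V : Type*} (G : SimpleGraph V)
    (hD : ¬ Nonempty (diamond ↪g G))
    (v : Fin 5 → V) (hv : Function.Injective v)
    (hC5 : ∀ i j, G.Adj (v i) (v j) ↔ j = i + 1 ∨ i = j + 1)
    (B : Fin 5 → Set V)
    (hB : ∀ i, B i = {u | u ∉ Set.range v ∧ ∀ j, G.Adj u (v j) ↔ (j = i ∨ j = i + 1)})
    (F : Fin 5 → Set V)
    (hF : ∀ i, F i = {u | u ∉ Set.range v ∧ ∀ j, G.Adj u (v j) ↔ (j = i ∨ j = i - 2 ∨ j = i + 2)}) :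
    (∀ i, ∀ f ∈ F i, ∀ b ∈ B (i + 2), G.Adj f b) ∧
      (∀ i j, j ≠ i + 2 → ∀ f ∈ F i, ∀ b ∈ B j, ¬ G.Adj f b) := by
  constructor
  · intro i f hf b hb
    rw [hF i] at hf
    rw [hB (i+2)] at hb
    obtain ⟨hfr, hfadj⟩ := hf
    obtain ⟨hbr, hbadj⟩ := hb
    by_contra nfb
    have hne : f ≠ b := by
      intro h
      subst h
      have h1 : G.Adj f (v i) := (hfadj i).mpr (Or.inl rfl)
      rcases (hbadj i).mp h1 with h2 | h2 <;> fin_omega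
    refine noDiamond G hD f b (v (i+2)) (v (i+3)) hne nfb ?_ ?_ ?_ ?_ ?_
    · exact (hfadj (i+2)).mpr (Or.inr (Or.inr rfl))
    · exact (hfadj (i+3)).mpr (Or.inr (Or.inl (by fin_omega)))
    · exact (hbadj (i+2)).mpr (Or.inl rfl)
    · exact (hbadj (i+3)).mpr (Or.inr (by fin_omega))
    · exact (hC5 (i+2) (i+3)).mpr (Or.inl (by fin_omega))
  · intro i j hj f hf b hb hfb
    rw [hF i] at hf
    rw [hB j] at hb
    obtain ⟨hfr, hfadj⟩ := hf
    obtain ⟨hbr, hbadj⟩ := hb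
    have hfx : ∀ x : Fin 5, v x ≠ f := fun x h => hfr ⟨x, h⟩
    have nf : ∀ x : Fin 5, x ≠ i → x ≠ i - 2 → x ≠ i + 2 → ¬ G.Adj f (v x) := by
      intro x h1 h2 h3 h
      rcases (hfadj x).mp h with h' | h' | h' <;> simp_all
    have key : ∀ i j : Fin 5, j ≠ i + 2 → i = j ∨ i + 1 = j ∨ i + 3 = j ∨ i + 4 = j := by
      decide
    rcases key i j hj with h | h | h | h <;> subst h
    · exact noDiamond G hD (v (i+1)) f b (v i) (hfx _)
        (fun h => nf (i+1) (by fin_omega) (by fin_omega) (by fin_omega) h.symm)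
        ((hbadj (i+1)).mpr (Or.inr rfl)).symm
        ((hC5 (i+1) i).mpr (Or.inr rfl)) hfb
        ((hfadj i).mpr (Or.inl rfl)) ((hbadj i).mpr (Or.inl rfl))
    · exact noDiamond G hD (v (i+1)) f b (v (i+2)) (hfx _)
        (fun h => nf (i+1) (by fin_omega) (by fin_omega) (by fin_omega) h.symm)
        ((hbadj (i+1)).mpr (Or.inl rfl)).symm
        ((hC5 (i+1) (i+2)).mpr (Or.inl (by fin_omega))) hfb
        ((hfadj (i+2)).mpr (Or.inr (Or.inr rfl))) ((hbadj (i+2)).mpr (Or.inr (by fin_omega)))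
    · exact noDiamond G hD (v (i+4)) f b (v (i+3)) (hfx _)
        (fun h => nf (i+4) (by fin_omega) (by fin_omega) (by fin_omega) h.symm)
        ((hbadj (i+4)).mpr (Or.inr (by fin_omega))).symm
        ((hC5 (i+4) (i+3)).mpr (Or.inr (by fin_omega))) hfb
        ((hfadj (i+3)).mpr (Or.inr (Or.inl (by fin_omega)))) ((hbadj (i+3)).mpr (Or.inl rfl))
    · exact noDiamond G hD (v (i+4)) f b (v i) (hfx _)
        (fun h => nf (i+4) (by fin_omega) (by fin_omega) (by fin_omega) h.symm)
        ((hbadj (i+4)).mpr (Or.inl rfl)).symm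
        ((hC5 (i+4) i).mpr (Or.inl (by fin_omega))) hfb
        ((hfadj i).mpr (Or.inl rfl)) ((hbadj i).mpr (Or.inr (by fin_omega)))
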